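/- Let D be a finite semifield and let 𝒟 be a complete set of pairwise non-isomorphic finite semifields such that every finite semifield isotopic to D is isomorphic to exactly one member of 𝒟. Then (|D| − 1)² = |At(D)| · Σ_{E ∈ 𝒟} 1/|Aut(E)|, as an identity of rational numbers, where At(D) is the autotopism group of D and Aut(E) is the automorphism group of E. -/

import Mathlib

/-- A finite semifield: a finite nonassociative ring with identity in which
the product of any two nonzero elements is nonzero. -/
structure FiniteSemifield where
  D : Type
  [addGroup : AddCommGroup D]
  mul : D → D → D
  one : D
  finite : Finite D
  mul_add : ∀ a b c : D, mul a (b + c) = mul a b + mul a c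
  add_mul : ∀ a b c : D, mul (a + b) c = mul a c + mul b c
  one_mul : ∀ a : D, mul one a = a
  mul_one : ∀ a : D, mul a one = a
  one_ne_zero : one ≠ (0 : D)
  noZeroDiv : ∀ a b : D, mul a b = 0 → a = 0 ∨ b = 0

attribute [instance] FiniteSemifield.addGroup

/-- Isotopy of finite semifields: a triple of additive bijections `(F, G, H)`
with `H (a b) = F a · G b`. -/
def FiniteSemifield.Isotopic (S T : FiniteSemifield) : Prop :=
  ∃ F G H : S.D ≃+ T.D, ∀ a b : S.D, H (S.mul a b) = T.mul (F a) (G b)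

/-- Isomorphism of finite semifields: an additive bijection preserving products. -/
def FiniteSemifield.Isomorphic (S T : FiniteSemifield) : Prop :=
  ∃ φ : S.D ≃+ T.D, ∀ a b : S.D, φ (S.mul a b) = T.mul (φ a) (φ b)

/-- The autotopism group of a finite semifield, as a type. -/
def FiniteSemifield.Autotopism (S : FiniteSemifield) : Type :=
  {t : (S.D ≃+ S.D) × (S.D ≃+ S.D) × (S.D ≃+ S.D) //
    ∀ a b : S.D, t.2.2 (S.mul a b) = S.mul (t.1 a) (t.2.1 b)}

/-- The automorphism group of a finite semifield, as a type. -/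
def FiniteSemifield.Aut (S : FiniteSemifield) : Type :=
  {φ : S.D ≃+ S.D // ∀ a b : S.D, φ (S.mul a b) = S.mul (φ a) (φ b)}

namespace FiniteSemifield

attribute [local instance] FiniteSemifield.finite

/-- Left multiplication as an additive hom. -/
def Lhom (D : FiniteSemifield) (y : D.D) : D.D →+ D.D :=
  AddMonoidHom.mk' (D.mul y) (D.mul_add y)

/-- Right multiplication as an additive hom. -/
def Rhom (D : FiniteSemifield) (z : D.D) : D.D →+ D.D :=
  AddMonoidHom.mk' (fun a => D.mul a z) (fun a b => D.add_mul a b z)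

lemma Lhom_bij (D : FiniteSemifield) {y : D.D} (hy : y ≠ 0) :
    Function.Bijective (D.Lhom y) := by
  rw [← Finite.injective_iff_bijective]
  intro a b h
  have : D.Lhom y (a - b) = 0 := by rw [map_sub, h, sub_self]
  rcases D.noZeroDiv y (a - b) this with h' | h'
  · exact absurd h' hy
  · exact sub_eq_zero.mp h'

lemma Rhom_bij (D : FiniteSemifield) {z : D.D} (hz : z ≠ 0) :
    Function.Bijective (D.Rhom z) := by
  rw [← Finite.injective_iff_bijective]
  intro a b h
  have : D.Rhom z (a - b) = 0 := by rw [map_sub, h, sub_self]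
  rcases D.noZeroDiv (a - b) z this with h' | h'
  · exact sub_eq_zero.mp h'
  · exact absurd h' hz

/-- Left multiplication as an additive equivalence. -/
noncomputable def Lequiv (D : FiniteSemifield) {y : D.D} (hy : y ≠ 0) : D.D ≃+ D.D :=
  AddEquiv.ofBijective (D.Lhom y) (D.Lhom_bij hy)

noncomputable def Requiv (D : FiniteSemifield) {z : D.D} (hz : z ≠ 0) : D.D ≃+ D.D :=
  AddEquiv.ofBijective (D.Rhom z) (D.Rhom_bij hz)

@[simp] lemma Lequiv_apply (D : FiniteSemifield) {y : D.D} (hy : y ≠ 0) (a : D.D) :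
    D.Lequiv hy a = D.mul y a := rfl

@[simp] lemma Requiv_apply (D : FiniteSemifield) {z : D.D} (hz : z ≠ 0) (a : D.D) :
    D.Requiv hz a = D.mul a z := rfl

/-- The principal isotope `D_{y,z}`. -/
noncomputable def PIso (D : FiniteSemifield) {y z : D.D} (hy : y ≠ 0) (hz : z ≠ 0) :
    FiniteSemifield where
  D := D.D
  mul a b := D.mul ((D.Requiv hz).symm a) ((D.Lequiv hy).symm b)
  one := D.mul y z
  finite := D.finite
  mul_add a b c := by rw [map_add, D.mul_add]
  add_mul a b c := by rw [map_add, D.add_mul]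
  one_mul a := by
    have h1 : (D.Requiv hz).symm (D.mul y z) = y := by
      rw [AddEquiv.symm_apply_eq, Requiv_apply]
    rw [h1]
    have := (D.Lequiv hy).apply_symm_apply a
    rwa [Lequiv_apply] at this
  mul_one a := by
    have h1 : (D.Lequiv hy).symm (D.mul y z) = z := by
      rw [AddEquiv.symm_apply_eq, Lequiv_apply]
    rw [h1]
    have := (D.Requiv hz).apply_symm_apply a
    rwa [Requiv_apply] at this
  one_ne_zero := fun h => by
    rcases D.noZeroDiv y z h with h' | h'
    · exact hy h'
    · exact hz h'
  noZeroDiv a b h := by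
    rcases D.noZeroDiv _ _ h with h' | h'
    · left
      have h2 := congrArg (D.Requiv hz) h'
      rwa [AddEquiv.apply_symm_apply, map_zero] at h2
    · right
      have h2 := congrArg (D.Lequiv hy) h'
      rwa [AddEquiv.apply_symm_apply, map_zero] at h2

@[simp] lemma PIso_mul (D : FiniteSemifield) {y z : D.D} (hy : y ≠ 0) (hz : z ≠ 0) (a b : D.D) :
    (D.PIso hy hz).mul a b = D.mul ((D.Requiv hz).symm a) ((D.Lequiv hy).symm b) := rfl

@[simp] lemma PIso_one (D : FiniteSemifield) {y z : D.D} (hy : y ≠ 0) (hz : z ≠ 0) :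
    (D.PIso hy hz).one = D.mul y z := rfl

/-- The type of isotopies between two semifields. -/
def Itop (S T : FiniteSemifield) : Type :=
  {t : (S.D ≃+ T.D) × (S.D ≃+ T.D) × (S.D ≃+ T.D) //
    ∀ a b : S.D, t.2.2 (S.mul a b) = T.mul (t.1 a) (t.2.1 b)}

lemma autotopism_eq (D : FiniteSemifield) : D.Autotopism = Itop D D := rfl

/-- The type of isomorphisms between two semifields. -/
def Isom (S T : FiniteSemifield) : Type :=
  {φ : S.D ≃+ T.D // ∀ a b : S.D, φ (S.mul a b) = T.mul (φ a) (φ b)}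

lemma aut_eq (D : FiniteSemifield) : D.Aut = Isom D D := rfl

instance (S T : FiniteSemifield) : Finite (Itop S T) := by
  have := S.finite; have := T.finite
  unfold Itop; infer_instance

instance (S T : FiniteSemifield) : Finite (Isom S T) := by
  have := S.finite; have := T.finite
  unfold Isom; infer_instance

/-- Composition with a fixed isotopy gives a bijection `Itop T T ≃ Itop S T`. -/
noncomputable def itopEquiv (S T : FiniteSemifield) (t₀ : Itop S T) :
    Itop T T ≃ Itop S T where
  toFun u := ⟨(t₀.1.1.trans u.1.1, t₀.1.2.1.trans u.1.2.1, t₀.1.2.2.trans u.1.2.2), by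
    intro a b
    simp only [AddEquiv.trans_apply]
    rw [t₀.2 a b, u.2]⟩
  invFun s := ⟨(t₀.1.1.symm.trans s.1.1, t₀.1.2.1.symm.trans s.1.2.1,
      t₀.1.2.2.symm.trans s.1.2.2), by
    intro a b
    simp only [AddEquiv.trans_apply]
    obtain ⟨x, rfl⟩ := t₀.1.1.surjective a
    obtain ⟨y, rfl⟩ := t₀.1.2.1.surjective b
    rw [← t₀.2 x y]
    simp only [AddEquiv.symm_apply_apply]
    exact s.2 x y⟩
  left_inv u := by
    apply Subtype.ext
    refine Prod.ext ?_ (Prod.ext ?_ ?_) <;>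
      · apply AddEquiv.ext; intro x
        simp
  right_inv s := by
    apply Subtype.ext
    refine Prod.ext ?_ (Prod.ext ?_ ?_) <;>
      · apply AddEquiv.ext; intro x
        simp

/-- Composition with a fixed isomorphism gives a bijection `Isom S S ≃ Isom S T`. -/
noncomputable def isomEquiv (S T : FiniteSemifield) (φ₀ : Isom S T) :
    Isom S S ≃ Isom S T where
  toFun ψ := ⟨ψ.1.trans φ₀.1, by
    intro a b
    simp only [AddEquiv.trans_apply]
    rw [ψ.2, φ₀.2]⟩
  invFun ψ := ⟨ψ.1.trans φ₀.1.symm, by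
    intro a b
    simp only [AddEquiv.trans_apply]
    rw [ψ.2]
    apply φ₀.1.injective
    rw [AddEquiv.apply_symm_apply, φ₀.2]
    simp⟩
  left_inv ψ := by
    apply Subtype.ext; apply AddEquiv.ext; intro x; simp
  right_inv ψ := by
    apply Subtype.ext; apply AddEquiv.ext; intro x; simp

lemma card_isom (S T : FiniteSemifield) (h : S.Isomorphic T) :
    Nat.card (Isom S T) = Nat.card S.Aut := by
  obtain ⟨φ, hφ⟩ := h
  rw [aut_eq]
  exact (Nat.card_congr (isomEquiv S T ⟨φ, hφ⟩)).symm

lemma isom_nonempty_iff (S T : FiniteSemifield) : Nonempty (Isom S T) ↔ S.Isomorphic T := by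
  constructor
  · rintro ⟨φ, hφ⟩; exact ⟨φ, hφ⟩
  · rintro ⟨φ, hφ⟩; exact ⟨φ, hφ⟩

/-- An isomorphism sends the identity to the identity. -/
lemma isom_one (S T : FiniteSemifield) (φ : Isom S T) : φ.1 S.one = T.one := by
  have hleft : ∀ b : T.D, T.mul (φ.1 S.one) b = b := by
    intro b
    obtain ⟨x, rfl⟩ := φ.1.surjective b
    rw [← φ.2, S.one_mul]
  have := hleft T.one
  rwa [T.mul_one] at this

variable {S D : FiniteSemifield}

lemma itop_fst_ne (t : Itop S D) : t.1.1 S.one ≠ 0 := fun h =>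
  S.one_ne_zero (t.1.1.injective (by simpa using h))

lemma itop_snd_ne (t : Itop S D) : t.1.2.1 S.one ≠ 0 := fun h =>
  S.one_ne_zero (t.1.2.1.injective (by simpa using h))

/-- Isomorphic is symmetric. -/
lemma Isomorphic.symm {S T : FiniteSemifield} (h : S.Isomorphic T) : T.Isomorphic S := by
  obtain ⟨φ, hφ⟩ := h
  refine ⟨φ.symm, fun a b => ?_⟩
  apply φ.injective
  rw [AddEquiv.apply_symm_apply, hφ]
  simp

/-- Isomorphic is transitive. -/
lemma Isomorphic.trans {S T U : FiniteSemifield} (h1 : S.Isomorphic T) (h2 : T.Isomorphic U) :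
    S.Isomorphic U := by
  obtain ⟨φ, hφ⟩ := h1
  obtain ⟨ψ, hψ⟩ := h2
  exact ⟨φ.trans ψ, fun a b => by simp only [AddEquiv.trans_apply, hφ, hψ]⟩

/-- The projection of an isotopy `S → D` to its pair of nonzero elements. -/
def itopProj (t : Itop S D) : {p : D.D × D.D // p.1 ≠ 0 ∧ p.2 ≠ 0} :=
  ⟨(t.1.1 S.one, t.1.2.1 S.one), itop_fst_ne t, itop_snd_ne t⟩

/-- The fiber of `itopProj` over `(y, z)` is equivalent to the isomorphisms onto the
principal isotope `D_{y,z}`. -/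
noncomputable def fiberEquiv (S D : FiniteSemifield) {y z : D.D} (hy : y ≠ 0) (hz : z ≠ 0) :
    {t : Itop S D // t.1.1 S.one = y ∧ t.1.2.1 S.one = z} ≃ Isom S (D.PIso hy hz) where
  toFun t := ⟨t.1.1.2.2, by
    obtain ⟨t, hty, htz⟩ := t
    intro a b
    show t.1.2.2 (S.mul a b) =
      D.mul ((D.Requiv hz).symm (t.1.2.2 a)) ((D.Lequiv hy).symm (t.1.2.2 b))
    have e1 : (D.Requiv hz).symm (t.1.2.2 a) = t.1.1 a := by
      rw [AddEquiv.symm_apply_eq]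
      show t.1.2.2 a = D.mul (t.1.1 a) z
      have h := t.2 a S.one
      rw [S.mul_one, htz] at h
      exact h
    have e2 : (D.Lequiv hy).symm (t.1.2.2 b) = t.1.2.1 b := by
      rw [AddEquiv.symm_apply_eq]
      show t.1.2.2 b = D.mul y (t.1.2.1 b)
      have h := t.2 S.one b
      rw [S.one_mul, hty] at h
      exact h
    rw [e1, e2, t.2]⟩
  invFun φ := ⟨⟨(φ.1.trans (D.Requiv hz).symm, φ.1.trans (D.Lequiv hy).symm, φ.1), by
      intro a b
      simp only [AddEquiv.trans_apply]
      exact φ.2 a b⟩, by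
    have h1 : φ.1 S.one = D.mul y z := isom_one S (D.PIso hy hz) φ
    constructor
    · show (D.Requiv hz).symm (φ.1 S.one) = y
      rw [h1, AddEquiv.symm_apply_eq]; rfl
    · show (D.Lequiv hy).symm (φ.1 S.one) = z
      rw [h1, AddEquiv.symm_apply_eq]; rfl⟩
  left_inv t := by
    obtain ⟨t, hty, htz⟩ := t
    apply Subtype.ext
    apply Subtype.ext
    refine Prod.ext ?_ (Prod.ext ?_ rfl)
    · apply AddEquiv.ext; intro a
      simp only [AddEquiv.trans_apply]
      refine (AddEquiv.symm_apply_eq (D.Requiv hz)).mpr ?_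
      show t.1.2.2 a = D.mul (t.1.1 a) z
      have h := t.2 a S.one
      rw [S.mul_one, htz] at h
      exact h
    · apply AddEquiv.ext; intro b
      simp only [AddEquiv.trans_apply]
      refine (AddEquiv.symm_apply_eq (D.Lequiv hy)).mpr ?_
      show t.1.2.2 b = D.mul y (t.1.2.1 b)
      have h := t.2 S.one b
      rw [S.one_mul, hty] at h
      exact h
  right_inv φ := Subtype.ext rfl

/-- Each principal isotope is isotopic to `D`. -/
lemma piso_isotopic (D : FiniteSemifield) {y z : D.D} (hy : y ≠ 0) (hz : z ≠ 0) :
    (D.PIso hy hz).Isotopic D :=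
  ⟨(D.Requiv hz).symm, (D.Lequiv hy).symm, AddEquiv.refl D.D, fun _ _ => rfl⟩

lemma nat_card_sigma {ι : Type*} [Fintype ι] (f : ι → Type*) [∀ i, Finite (f i)] :
    Nat.card (Sigma f) = ∑ i, Nat.card (f i) := by
  classical
  letI : ∀ i, Fintype (f i) := fun i => Fintype.ofFinite _
  simp [Nat.card_eq_fintype_card, Fintype.card_sigma]

/-- The central counting identity. -/
lemma card_itop_eq_sum (S D : FiniteSemifield)
    [Fintype {p : D.D × D.D // p.1 ≠ 0 ∧ p.2 ≠ 0}] :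
    Nat.card (Itop S D) =
      ∑ p : {p : D.D × D.D // p.1 ≠ 0 ∧ p.2 ≠ 0},
        Nat.card (Isom S (D.PIso p.2.1 p.2.2)) := by
  classical
  have hfinS := S.finite
  have hfinD := D.finite
  rw [Nat.card_congr (Equiv.sigmaFiberEquiv (itopProj (S := S) (D := D))).symm,
    nat_card_sigma]
  refine Finset.sum_congr rfl fun p _ => ?_
  refine Nat.card_congr (Equiv.trans ?_ (fiberEquiv S D p.2.1 p.2.2))
  refine Equiv.subtypeEquivRight fun t => ?_
  rw [Subtype.ext_iff, Prod.ext_iff]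
  rfl

instance (S : FiniteSemifield) : Finite S.Aut := by
  rw [aut_eq]; infer_instance

instance (S : FiniteSemifield) : Finite S.Autotopism := by
  rw [autotopism_eq]; infer_instance

lemma aut_nonempty (S : FiniteSemifield) : Nonempty S.Aut :=
  ⟨⟨AddEquiv.refl S.D, fun _ _ => rfl⟩⟩

lemma card_itop_eq_card_autotopism (S D : FiniteSemifield) (h : S.Isotopic D) :
    Nat.card (Itop S D) = Nat.card D.Autotopism := by
  obtain ⟨F, G, H, hFGH⟩ := h
  rw [autotopism_eq]
  exact (Nat.card_congr (itopEquiv S D ⟨(F, G, H), hFGH⟩)).symm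

end FiniteSemifield

/-- If `𝒟 = (E i)` is a complete family of pairwise non-isomorphic finite semifields
such that every finite semifield isotopic to `D` is isomorphic to exactly one member,
then `(|D| − 1)² = |At(D)| · Σ_E 1/|Aut(E)|`. -/
theorem semifield_isotopy_class_counting (D : FiniteSemifield)
    {ι : Type} [Fintype ι] (E : ι → FiniteSemifield)
    (hisot : ∀ i, (E i).Isotopic D)
    (hpairwise : ∀ i j, i ≠ j → ¬ (E i).Isomorphic (E j))
    (hcomplete : ∀ S : FiniteSemifield, S.Isotopic D → ∃ i, S.Isomorphic (E i)) :
    ((Nat.card D.D : ℚ) - 1) ^ 2 =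
      (Nat.card D.Autotopism : ℚ) * ∑ i, 1 / (Nat.card (E i).Aut : ℚ) := by
  classical
  have hfinD : Finite D.D := D.finite
  letI : Fintype D.D := Fintype.ofFinite _
  letI instX : Fintype {p : D.D × D.D // p.1 ≠ 0 ∧ p.2 ≠ 0} := Fintype.ofFinite _
  have hex : ∀ p : {p : D.D × D.D // p.1 ≠ 0 ∧ p.2 ≠ 0},
      ∃ i, (D.PIso p.2.1 p.2.2).Isomorphic (E i) :=
    fun p => hcomplete _ (FiniteSemifield.piso_isotopic D p.2.1 p.2.2)
  choose f hf using hex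
  have hterm : ∀ i (p : {p : D.D × D.D // p.1 ≠ 0 ∧ p.2 ≠ 0}),
      Nat.card (FiniteSemifield.Isom (E i) (D.PIso p.2.1 p.2.2)) =
        if f p = i then Nat.card (E i).Aut else 0 := by
    intro i p
    by_cases h : f p = i
    · rw [if_pos h]
      exact FiniteSemifield.card_isom _ _ (FiniteSemifield.Isomorphic.symm (h ▸ hf p))
    · rw [if_neg h]
      have hempty : IsEmpty (FiniteSemifield.Isom (E i) (D.PIso p.2.1 p.2.2)) := by
        constructor
        intro φ
        have h1 : (E i).Isomorphic (D.PIso p.2.1 p.2.2) := ⟨φ.1, φ.2⟩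
        exact hpairwise i (f p) (fun he => h he.symm) (h1.trans (hf p))
      exact Nat.card_of_isEmpty
  set N : ι → ℕ := fun i =>
    (Finset.univ.filter (fun p : {p : D.D × D.D // p.1 ≠ 0 ∧ p.2 ≠ 0} => f p = i)).card with hN
  have hAutpos : ∀ i, 0 < Nat.card (E i).Aut := by
    intro i
    have : Nonempty (E i).Aut := FiniteSemifield.aut_nonempty (E i)
    exact Nat.card_pos
  have hA : ∀ i, Nat.card D.Autotopism = N i * Nat.card (E i).Aut := by
    intro i
    rw [← FiniteSemifield.card_itop_eq_card_autotopism (E i) D (hisot i),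
      FiniteSemifield.card_itop_eq_sum (E i) D]
    rw [Finset.sum_congr rfl (fun p _ => hterm i p), ← Finset.sum_filter,
      Finset.sum_const, smul_eq_mul]
  have hsumN : ∑ i, N i = Nat.card {p : D.D × D.D // p.1 ≠ 0 ∧ p.2 ≠ 0} := by
    rw [Nat.card_eq_fintype_card, ← Finset.card_univ]
    exact (Finset.card_eq_sum_card_fiberwise (fun p _ => Finset.mem_univ (f p))).symm
  have hq : 1 ≤ Nat.card D.D := by
    have : Nonempty D.D := ⟨0⟩
    exact Nat.card_pos
  have hsub : Nat.card {a : D.D // a ≠ 0} = Nat.card D.D - 1 := by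
    rw [Nat.card_eq_fintype_card, Nat.card_eq_fintype_card]
    rw [Fintype.card_subtype_compl (p := fun a : D.D => a = 0), Fintype.card_subtype_eq]
  have hXcard : ((Nat.card {p : D.D × D.D // p.1 ≠ 0 ∧ p.2 ≠ 0} : ℕ) : ℚ) =
      ((Nat.card D.D : ℚ) - 1) ^ 2 := by
    rw [Nat.card_congr (Equiv.subtypeProdEquivProd
      (p := fun a : D.D => a ≠ 0) (q := fun b : D.D => b ≠ 0)), Nat.card_prod, hsub]
    rw [Nat.cast_mul, Nat.cast_sub hq]
    push_cast
    ring
  rw [Finset.mul_sum]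
  have hterm2 : ∀ i ∈ Finset.univ,
      (Nat.card D.Autotopism : ℚ) * (1 / (Nat.card (E i).Aut : ℚ)) = (N i : ℚ) := by
    intro i _
    have hne : ((Nat.card (E i).Aut : ℚ)) ≠ 0 := Nat.cast_ne_zero.mpr (hAutpos i).ne'
    rw [hA i]
    push_cast
    rw [mul_one_div, mul_div_assoc, div_self hne, mul_one]
  rw [Finset.sum_congr rfl hterm2, ← Nat.cast_sum, hsumN, hXcard]
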